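/- A set of consecutive indices B = {i, i+1, …, i+k} is a block of a permutation π ∈ S_n (i.e., π(B) is a set of consecutive integers) if and only if B is a module of the poset Φ(π): for all u, v ∈ B and x ∉ B, u ≼ x iff v ≼ x, and x ≼ u iff x ≼ v. -/

import Mathlib

/-- The partial order `Φ(π)` on `[n]`: `i ≼ j` iff `i ≤ j` and `π⁻¹ i ≤ π⁻¹ j`. -/
def PhiLE {n : ℕ} (π : Equiv.Perm (Fin n)) (i j : Fin n) : Prop :=
  i ≤ j ∧ π⁻¹ i ≤ π⁻¹ j

/-- `T` is a module of `Φ(π)`: every element outside `T` compares identically to all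
elements of `T`. -/
def IsModule {n : ℕ} (π : Equiv.Perm (Fin n)) (T : Set (Fin n)) : Prop :=
  ∀ u ∈ T, ∀ v ∈ T, ∀ x ∉ T,
    (PhiLE π u x ↔ PhiLE π v x) ∧ (PhiLE π x u ↔ PhiLE π x v)

/-- A set of consecutive integers. -/
def IsConsecutive {n : ℕ} (B : Set (Fin n)) : Prop :=
  ∀ a ∈ B, ∀ c ∈ B, ∀ b, a ≤ b → b ≤ c → b ∈ B

lemma consec_cmp {n : ℕ} {S : Set (Fin n)} (hS : IsConsecutive S)
    {a b y : Fin n} (ha : a ∈ S) (hb : b ∈ S) (hy : y ∉ S) :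
    (a ≤ y ↔ b ≤ y) ∧ (y ≤ a ↔ y ≤ b) := by
  constructor
  · constructor
    · intro h
      by_contra hby
      exact hy (hS a ha b hb y h (le_of_lt (lt_of_not_ge hby)))
    · intro h
      by_contra hay
      exact hy (hS b hb a ha y h (le_of_lt (lt_of_not_ge hay)))
  · constructor
    · intro h
      by_contra hyb
      exact hy (hS b hb a ha y (le_of_lt (lt_of_not_ge hyb)) h)
    · intro h
      by_contra hya
      exact hy (hS a ha b hb y (le_of_lt (lt_of_not_ge hya)) h)

/-- A set `B` of consecutive indices is a block of `π` (its image `π(B)` is a set of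
consecutive integers) if and only if the corresponding subset `π(B)` of the ground
set of `Φ(π)` is a module of `Φ(π)`. -/
theorem block_iff_module {n : ℕ} (π : Equiv.Perm (Fin n)) (B : Set (Fin n))
    (hB : IsConsecutive B) :
    IsConsecutive (π '' B) ↔ IsModule π (π '' B) := by
  constructor
  · intro hT u hu v hv x hx
    obtain ⟨a, ha, rfl⟩ := hu
    obtain ⟨b, hb, rfl⟩ := hv
    have hxB : π⁻¹ x ∉ B := fun h => hx ⟨π⁻¹ x, h, π.apply_symm_apply x⟩
    have h1 := consec_cmp hT (Set.mem_image_of_mem π ha) (Set.mem_image_of_mem π hb) hx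
    have h2 := consec_cmp hB ha hb hxB
    constructor
    · simp only [PhiLE, (show ∀ y, π⁻¹ (π y) = y from π.symm_apply_apply)]
      rw [h1.1, h2.1]
    · simp only [PhiLE, (show ∀ y, π⁻¹ (π y) = y from π.symm_apply_apply)]
      rw [h1.2, h2.2]
  · intro hM u huT w hwT b hub hbw
    by_contra hbT
    obtain ⟨a', ha', rfl⟩ := huT
    obtain ⟨c', hc', rfl⟩ := hwT
    have hyB : π⁻¹ b ∉ B := fun h => hbT ⟨π⁻¹ b, h, π.apply_symm_apply b⟩
    obtain ⟨hiff1, hiff2⟩ :=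
      hM (π a') (Set.mem_image_of_mem π ha') (π c') (Set.mem_image_of_mem π hc') b hbT
    rcases le_total a' (π⁻¹ b) with hay | hya
    · -- a' ≤ y, so y must be above c' as well (else y ∈ B)
      have hcy : c' ≤ π⁻¹ b := by
        by_contra hcy
        exact hyB (hB a' ha' c' hc' (π⁻¹ b) hay (le_of_lt (lt_of_not_ge hcy)))
      -- PhiLE (π a') b holds, hence PhiLE (π c') b, hence b = π c' ∈ T
      have h1 : PhiLE π (π a') b := by
        refine ⟨hub, ?_⟩
        simpa [(π.symm_apply_apply : ∀ y, π⁻¹ (π y) = y)] using hay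
      have h2 : PhiLE π (π c') b := hiff1.mp h1
      exact hbT (le_antisymm hbw h2.1 ▸ Set.mem_image_of_mem π hc')
    · -- y ≤ a', so y must be below c' as well (else y ∈ B)
      have hyc : π⁻¹ b ≤ c' := by
        by_contra hyc
        exact hyB (hB c' hc' a' ha' (π⁻¹ b) (le_of_lt (lt_of_not_ge hyc)) hya)
      have h1 : PhiLE π b (π c') := by
        refine ⟨hbw, ?_⟩
        simpa [(π.symm_apply_apply : ∀ y, π⁻¹ (π y) = y)] using hyc
      have h2 : PhiLE π b (π a') := hiff2.mpr h1
      exact hbT (le_antisymm h2.1 hub ▸ Set.mem_image_of_mem π ha')
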